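/- For a multiplicative Hom-Lie algebra (L, α_L), the complex d_n: Λⁿ L → Λⁿ⁻¹ L given by d_n(x₁∧⋯∧x_n) = Σ_{i<j} [x_i, x_j] ∧ α_L(x₁) ∧ ⋯ ∧ α̂_L(x_i) ∧ ⋯ ∧ α̂_L(x_j) ∧ ⋯ ∧ α_L(x_n) satisfies d_{n-1} ∘ d_n = 0; in particular d₂ ∘ d₃ = 0 on Λ³L. -/

import Mathlib

/-- For a multiplicative Hom-Lie algebra `(L, α)`, the differentials of the
Chevalley–Eilenberg-type Hom-complex satisfy `d_{n-1} ∘ d_n = 0`; in particular, for any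
linear maps `d₂ : Λ²L → L` and `d₃ : Λ³L → Λ²L` realising the defining formulas
`d₂(x∧y) = ⁅x,y⁆` and `d₃(x∧y∧z) = ⁅x,y⁆∧α(z) − ⁅x,z⁆∧α(y) + ⁅y,z⁆∧α(x)`, we have
`d₂ ∘ d₃ = 0` on `Λ³L`. -/
theorem stmt11 (K L : Type*) [Field K] [AddCommGroup L] [Module K L]
    (br : L →ₗ[K] L →ₗ[K] L) (α : L →ₗ[K] L)
    (skew : ∀ x y : L, br x y = -br y x) (alt : ∀ x : L, br x x = 0)
    (jac : ∀ x y z : L, br (α x) (br y z) + br (α z) (br x y) + br (α y) (br z x) = 0)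
    (mult : ∀ x y : L, α (br x y) = br (α x) (α y))
    (d2 : ⋀[K]^2 L →ₗ[K] L) (d3 : ⋀[K]^3 L →ₗ[K] ⋀[K]^2 L)
    (hd2 : ∀ x y : L,
      d2 ⟨ExteriorAlgebra.ιMulti K 2 ![x, y],
        ExteriorAlgebra.ιMulti_range K 2 (Set.mem_range_self _)⟩ = br x y)
    (hd3 : ∀ x y z : L,
      d3 ⟨ExteriorAlgebra.ιMulti K 3 ![x, y, z],
          ExteriorAlgebra.ιMulti_range K 3 (Set.mem_range_self _)⟩
        = ⟨ExteriorAlgebra.ιMulti K 2 ![br x y, α z],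
            ExteriorAlgebra.ιMulti_range K 2 (Set.mem_range_self _)⟩
          - ⟨ExteriorAlgebra.ιMulti K 2 ![br x z, α y],
              ExteriorAlgebra.ιMulti_range K 2 (Set.mem_range_self _)⟩
          + ⟨ExteriorAlgebra.ιMulti K 2 ![br y z, α x],
              ExteriorAlgebra.ιMulti_range K 2 (Set.mem_range_self _)⟩) :
    d2 ∘ₗ d3 = 0 := by
  refine LinearMap.ext fun v => ?_
  obtain ⟨a, ha⟩ := v
  simp only [LinearMap.comp_apply, LinearMap.zero_apply]
  have key : ∀ a ∈ Submodule.span K (Set.range (ExteriorAlgebra.ιMulti K 3 (M := L))),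
      ∀ (h : a ∈ ⋀[K]^3 L), d2 (d3 ⟨a, h⟩) = 0 := by
    intro a ha
    induction ha using Submodule.span_induction with
    | mem a hmem =>
      obtain ⟨m, rfl⟩ := hmem
      intro h
      have hm : m = ![m 0, m 1, m 2] := by
        funext i; fin_cases i <;> rfl
      set x := m 0; set y := m 1; set z := m 2
      have : (⟨ExteriorAlgebra.ιMulti K 3 m, h⟩ : ⋀[K]^3 L)
          = ⟨ExteriorAlgebra.ιMulti K 3 ![x, y, z],
              ExteriorAlgebra.ιMulti_range K 3 (Set.mem_range_self _)⟩ := by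
        apply Subtype.ext; rw [← hm]
      rw [this, hd3, map_add, map_sub, hd2, hd2, hd2]
      have h1 : br (br x y) (α z) = -br (α z) (br x y) := skew _ _
      have h2 : br (br x z) (α y) = br (α y) (br z x) := by
        rw [skew (br x z) (α y), skew x z, map_neg, neg_neg]
      have h3 : br (br y z) (α x) = -br (α x) (br y z) := skew _ _
      rw [h1, h2, h3]
      have hj := jac x y z
      calc -br (α z) (br x y) - br (α y) (br z x) + -br (α x) (br y z)
          = -(br (α x) (br y z) + br (α z) (br x y) + br (α y) (br z x)) := by abel
        _ = 0 := by rw [hj, neg_zero]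
    | zero => intro h; simp only [show (⟨0, h⟩ : ⋀[K]^3 L) = 0 from rfl, map_zero]
    | add a b ha hb iha ihb =>
      intro h
      have : (⟨a + b, h⟩ : ⋀[K]^3 L) = ⟨a, by
          rw [← ExteriorAlgebra.ιMulti_span_fixedDegree]; exact ha⟩ + ⟨b, by
          rw [← ExteriorAlgebra.ιMulti_span_fixedDegree]; exact hb⟩ := rfl
      rw [this, map_add, map_add, iha, ihb, add_zero]
    | smul c a ha iha =>
      intro h
      have : (⟨c • a, h⟩ : ⋀[K]^3 L) = c • ⟨a, by
          rw [← ExteriorAlgebra.ιMulti_span_fixedDegree]; exact ha⟩ := rfl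
      rw [this, map_smul, map_smul, iha, smul_zero]
  exact key a (by rw [ExteriorAlgebra.ιMulti_span_fixedDegree]; exact ha) ha
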